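/- Let Z be an unriggable event with I_{¬Z} = 1 − I_Z, and let R be a reward function and c a constant. For any history h_t with I_{¬Z}(h_t) > 0, and any policies π, π': V(cI_Z + R·I_{¬Z}, π, h_t) ≥ V(cI_Z + R·I_{¬Z}, π', h_t) if and only if V_{¬Z}(R, π, h_t) ≥ V_{¬Z}(R, π', h_t), where V_{¬Z}(R, π, h_t) = [Σ_{h_n} R(h_n) I_{¬Z}(h_n) μ(h_n | h_t, π)] / I_{¬Z}(h_t). Consequently, a policy maximizing the standard expected reward cI_Z + R·I_{¬Z} is exactly a policy maximizing the conditional expected reward of R given ¬Z. -/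
import Mathlib


/-- Effective disbelief. For unriggable `Z` (expectation `IZh` at
`h_t` policy-independent) with `I_{¬Z}(h_t) = 1 - IZh > 0`, comparing two
policies by the standard value of `c·I_Z + R·I_{¬Z}` is equivalent to comparing
them by the `¬Z`-conditioned value
`V_{¬Z}(R,π,h_t) = (Σ_{h_n} R(h_n) I_{¬Z}(h_n) μ(h_n|h_t,π)) / I_{¬Z}(h_t)`;
consequently a policy maximizes the former iff it maximizes the latter. -/
theorem stmt4 {H Hn Pol : Type} [Fintype Hn]
    (μ : Hn → H → Pol → ℝ)
    (IZ : Hn → ℝ) (R : Hn → ℝ) (c : ℝ)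
    (ht : H) (IZh : ℝ)
    (hunrig : ∀ π : Pol, ∑ hn, μ hn ht π * IZ hn = IZh)
    (hpos : 0 < 1 - IZh) :
    (∀ π π' : Pol,
      (∑ hn, μ hn ht π' * (c * IZ hn + R hn * (1 - IZ hn))) ≤
        (∑ hn, μ hn ht π * (c * IZ hn + R hn * (1 - IZ hn))) ↔
      (∑ hn, R hn * (1 - IZ hn) * μ hn ht π') / (1 - IZh) ≤
        (∑ hn, R hn * (1 - IZ hn) * μ hn ht π) / (1 - IZh)) ∧
    (∀ πm : Pol,
      (∀ π : Pol,
        (∑ hn, μ hn ht π * (c * IZ hn + R hn * (1 - IZ hn))) ≤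
          ∑ hn, μ hn ht πm * (c * IZ hn + R hn * (1 - IZ hn))) ↔
      (∀ π : Pol,
        (∑ hn, R hn * (1 - IZ hn) * μ hn ht π) / (1 - IZh) ≤
          (∑ hn, R hn * (1 - IZ hn) * μ hn ht πm) / (1 - IZh))) := by
  have key : ∀ π : Pol,
      (∑ hn, μ hn ht π * (c * IZ hn + R hn * (1 - IZ hn)))
        = c * IZh + ∑ hn, R hn * (1 - IZ hn) * μ hn ht π := by
    intro π
    rw [← hunrig π, Finset.mul_sum, ← Finset.sum_add_distrib]
    apply Finset.sum_congr rfl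
    intro hn _
    ring
  have base : ∀ π π' : Pol,
      (∑ hn, μ hn ht π' * (c * IZ hn + R hn * (1 - IZ hn))) ≤
        (∑ hn, μ hn ht π * (c * IZ hn + R hn * (1 - IZ hn))) ↔
      (∑ hn, R hn * (1 - IZ hn) * μ hn ht π') / (1 - IZh) ≤
        (∑ hn, R hn * (1 - IZ hn) * μ hn ht π) / (1 - IZh) := by
    intro π π'
    rw [key π, key π', add_le_add_iff_left]
    exact (div_le_div_iff_of_pos_right hpos).symm
  exact ⟨base, fun πm => forall_congr' fun π => base πm π⟩
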